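/- Suppose p ∈ [1,∞), Q : D → [0,∞) is continuous, and γ > 0, δ ≥ 0 are constants such that for every ξ ∈ D, all continuous inputs u, w : [0,∞) → D, and every solution x of the single-component system with inputs u, w and x(0) = ξ, one has ‖h∘x‖_{[0,t],p} ≤ γ‖h∘u‖_{[0,t],p} + δ‖h∘w‖_{[0,t],p} + Q(ξ) for all t ≥ 0. Define θ := γ + δ if δ < γ and θ := 2√(γδ) if δ ≥ γ, and assume θ < 1. Then for every n ∈ ℕ, every continuous input u : [0,∞) → D, every ξ = (ξ_1,…,ξ_n) ∈ D^n, and every solution (x_1,…,x_n) of the string (Σ_n) with input u, with w ≡ 0, and with initial condition ξ, the estimate ‖h∘x_i‖_{[0,t],p} ≤ (γ/(1−θ))‖h∘u‖_{[0,t],p} + (max(1, (δ/γ)^{(n−1)/2})/(1−θ))·max_{j=1,…,n} Q(ξ_j) holds for all t ≥ 0 and all i = 1,…,n. -/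

import Mathlib

/-- The `L^p` norm of a signal `y` on the interval `[0, t]`:
`‖y‖_{[0,t],p} = (∫_0^t |y(s)|^p ds)^{1/p}`. -/
noncomputable def lpNorm {m : ℕ} (p : ℝ) (y : ℝ → EuclideanSpace ℝ (Fin m)) (t : ℝ) : ℝ :=
  (∫ s in (0:ℝ)..t, ‖y s‖ ^ p) ^ (1 / p)


lemma string_max_principle (n : ℕ) (hn : 1 ≤ n) (b : ℕ → ℝ) (U P α β : ℝ)
    (hU : 0 ≤ U) (hP : 0 ≤ P) (hα : 0 ≤ α) (hβ : 0 ≤ β) (hθ : α + β < 1)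
    (hb0 : b 0 ≤ U) (hbn : b (n + 1) ≤ 0)
    (hbnn : ∀ i, 1 ≤ i → i ≤ n → 0 ≤ b i)
    (hrec : ∀ i, 1 ≤ i → i ≤ n → b i ≤ α * b (i - 1) + β * b (i + 1) + P) :
    ∀ i, 1 ≤ i → i ≤ n → b i ≤ (α * U + P) / (1 - (α + β)) := by
  obtain ⟨i0, hi0, hM⟩ := Finset.exists_mem_eq_sup' (Finset.nonempty_Icc.mpr hn) b
  set M := (Finset.Icc 1 n).sup' (Finset.nonempty_Icc.mpr hn) b with hMdef
  have hMb : ∀ i, 1 ≤ i → i ≤ n → b i ≤ M := fun i h1 h2 =>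
    Finset.le_sup' b (Finset.mem_Icc.mpr ⟨h1, h2⟩)
  obtain ⟨hi01, hi0n⟩ := Finset.mem_Icc.mp hi0
  have hM0 : 0 ≤ M := hM ▸ hbnn i0 hi01 hi0n
  have hprev : b (i0 - 1) ≤ max U M := by
    rcases eq_or_ne i0 1 with h1 | h1
    · simpa [h1] using le_trans hb0 (le_max_left U M)
    · exact le_trans (hMb (i0 - 1) (by omega) (by omega)) (le_max_right U M)
  have hnext : b (i0 + 1) ≤ M := by
    rcases eq_or_ne i0 n with h1 | h1
    · exact h1 ▸ le_trans hbn hM0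
    · exact hMb (i0 + 1) (by omega) (by omega)
  have key : M ≤ α * max U M + β * M + P := by
    calc M = b i0 := hM
    _ ≤ α * b (i0 - 1) + β * b (i0 + 1) + P := hrec i0 hi01 hi0n
    _ ≤ α * max U M + β * M + P := by
        have := mul_le_mul_of_nonneg_left hprev hα
        have := mul_le_mul_of_nonneg_left hnext hβ
        linarith
  have h1θ : 0 < 1 - (α + β) := by linarith
  have hMbound : M ≤ (α * U + P) / (1 - (α + β)) := by
    rw [le_div_iff₀ h1θ]
    rcases le_total U M with hc | hc
    · rw [max_eq_right hc] at key
      nlinarith [mul_nonneg hα hU]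
    · rw [max_eq_left hc] at key
      nlinarith [mul_nonneg hβ hM0]
  exact fun i h1 h2 => le_trans (hMb i h1 h2) hMbound


lemma lpNorm_nonneg {m : ℕ} (p : ℝ) (y : ℝ → EuclideanSpace ℝ (Fin m)) (t : ℝ) (ht : 0 ≤ t) :
    0 ≤ lpNorm p y t := by
  apply Real.rpow_nonneg
  exact intervalIntegral.integral_nonneg ht fun s _ => Real.rpow_nonneg (norm_nonneg _) p

/-- Theorem 3: component-wise trajectory-based sufficient conditions for `L^p`
one-sided string stability (the downstream input `w` is identically zero). -/
theorem one_sided_string_stability {k m : ℕ}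
    (D : Set (EuclideanSpace ℝ (Fin k))) (hDopen : IsOpen D) (hD0 : (0 : EuclideanSpace ℝ (Fin k)) ∈ D)
    (h : EuclideanSpace ℝ (Fin k) → EuclideanSpace ℝ (Fin m))
    (hhcont : ContinuousOn h D) (hh0 : h 0 = 0)
    (f : EuclideanSpace ℝ (Fin k) → EuclideanSpace ℝ (Fin k) → EuclideanSpace ℝ (Fin k) →
      EuclideanSpace ℝ (Fin k))
    (hf : LocallyLipschitzOn (D ×ˢ D ×ˢ D)
      (fun q : EuclideanSpace ℝ (Fin k) × EuclideanSpace ℝ (Fin k) × EuclideanSpace ℝ (Fin k) =>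
        f q.1 q.2.1 q.2.2))
    (p : ℝ) (hp : 1 ≤ p)
    (Q : EuclideanSpace ℝ (Fin k) → ℝ) (hQcont : ContinuousOn Q D) (hQ0 : ∀ ξ ∈ D, 0 ≤ Q ξ)
    (γ δ : ℝ) (hγ : 0 < γ) (hδ : 0 ≤ δ)
    (θ : ℝ) (hθdef : θ = if δ < γ then γ + δ else 2 * Real.sqrt (γ * δ)) (hθ : θ < 1)
    -- the single-component trajectory estimate (3.2)
    (Hcomp : ∀ ξ ∈ D, ∀ u w : ℝ → EuclideanSpace ℝ (Fin k),
      ContinuousOn u (Set.Ici 0) → ContinuousOn w (Set.Ici 0) →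
      (∀ t ≥ (0:ℝ), u t ∈ D) → (∀ t ≥ (0:ℝ), w t ∈ D) →
      ∀ x : ℝ → EuclideanSpace ℝ (Fin k),
        (∀ t ≥ (0:ℝ), x t ∈ D) → x 0 = ξ →
        (∀ t ≥ (0:ℝ), HasDerivAt x (f (u t) (x t) (w t)) t) →
        ∀ t ≥ (0:ℝ),
          lpNorm p (fun s => h (x s)) t ≤
            γ * lpNorm p (fun s => h (u s)) t + δ * lpNorm p (fun s => h (w s)) t + Q ξ) :
    -- conclusion: the one-sided string estimate with the explicit gains of Theorem 3
    ∀ (n : ℕ) (hn : 1 ≤ n), ∀ u : ℝ → EuclideanSpace ℝ (Fin k),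
      ContinuousOn u (Set.Ici 0) → (∀ t ≥ (0:ℝ), u t ∈ D) →
      ∀ ξ : ℕ → EuclideanSpace ℝ (Fin k), (∀ i, 1 ≤ i → i ≤ n → ξ i ∈ D) →
      ∀ x : ℕ → ℝ → EuclideanSpace ℝ (Fin k),
        (∀ t, x 0 t = u t) → (∀ t, x (n + 1) t = 0) →
        (∀ i, 1 ≤ i → i ≤ n →
          (∀ t ≥ (0:ℝ), x i t ∈ D) ∧ x i 0 = ξ i ∧
          (∀ t ≥ (0:ℝ), HasDerivAt (x i) (f (x (i - 1) t) (x i t) (x (i + 1) t)) t)) →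
        ∀ i, 1 ≤ i → i ≤ n → ∀ t ≥ (0:ℝ),
          lpNorm p (fun s => h (x i s)) t ≤
            (γ / (1 - θ)) * lpNorm p (fun s => h (u s)) t +
            (max 1 ((δ / γ) ^ (((n : ℝ) - 1) / 2)) / (1 - θ)) *
              ((Finset.Icc 1 n).sup' (Finset.nonempty_Icc.mpr hn) fun j => Q (ξ j)) := by
  intro n hn u hucont huD ξ hξD x hx0 hxlast hx i hi1 hin t ht
  have hp0 : 0 < p := lt_of_lt_of_le one_pos hp
  set a : ℕ → ℝ := fun j => lpNorm p (fun s => h (x j s)) t with hadef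
  set U : ℝ := lpNorm p (fun s => h (u s)) t with hUdef
  set Qm : ℝ := (Finset.Icc 1 n).sup' (Finset.nonempty_Icc.mpr hn) fun j => Q (ξ j) with hQmdef
  have hann : ∀ j, 0 ≤ a j := fun j => lpNorm_nonneg p _ t ht
  have hUnn : 0 ≤ U := lpNorm_nonneg p _ t ht
  have ha0 : a 0 = U := by
    show lpNorm p (fun s => h (x 0 s)) t = lpNorm p (fun s => h (u s)) t
    simp only [hx0]
  have halast : a (n + 1) = 0 := by
    show lpNorm p (fun s => h (x (n + 1) s)) t = 0
    have : (fun s => h (x (n + 1) s)) = fun _ : ℝ => (0 : EuclideanSpace ℝ (Fin m)) := by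
      funext s; rw [hxlast, hh0]
    rw [this]
    simp [lpNorm, Real.zero_rpow hp0.ne',
      Real.zero_rpow (inv_ne_zero hp0.ne')]
  have hQm : ∀ j, 1 ≤ j → j ≤ n → Q (ξ j) ≤ Qm := fun j h1 h2 =>
    Finset.le_sup' (fun j => Q (ξ j)) (Finset.mem_Icc.mpr ⟨h1, h2⟩)
  have hQmnn : 0 ≤ Qm := le_trans (hQ0 (ξ 1) (hξD 1 le_rfl hn)) (hQm 1 le_rfl hn)
  -- the recursive estimate from Hcomp
  have hrec : ∀ j, 1 ≤ j → j ≤ n → a j ≤ γ * a (j - 1) + δ * a (j + 1) + Qm := by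
    intro j hj1 hjn
    obtain ⟨hxD, hx0j, hxd⟩ := hx j hj1 hjn
    have hprevC : ContinuousOn (x (j - 1)) (Set.Ici 0) ∧ ∀ s ≥ (0:ℝ), x (j - 1) s ∈ D := by
      rcases eq_or_ne j 1 with h1 | h1
      · have hxu : x (j - 1) = u := by subst h1; exact funext hx0
        rw [hxu]; exact ⟨hucont, huD⟩
      · obtain ⟨hD', _, hd'⟩ := hx (j - 1) (by omega) (by omega)
        exact ⟨fun s hs => ((hd' s hs).continuousAt).continuousWithinAt, hD'⟩
    have hnextC : ContinuousOn (x (j + 1)) (Set.Ici 0) ∧ ∀ s ≥ (0:ℝ), x (j + 1) s ∈ D := by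
      rcases eq_or_ne j n with h1 | h1
      · have hxz : x (j + 1) = fun _ => (0 : EuclideanSpace ℝ (Fin k)) := by
          subst h1; exact funext hxlast
        rw [hxz]; exact ⟨continuousOn_const, fun s _ => hD0⟩
      · obtain ⟨hD', _, hd'⟩ := hx (j + 1) (by omega) (by omega)
        exact ⟨fun s hs => ((hd' s hs).continuousAt).continuousWithinAt, hD'⟩
    have hest := Hcomp (ξ j) (hξD j hj1 hjn) (x (j - 1)) (x (j + 1)) hprevC.1 hnextC.1
      hprevC.2 hnextC.2 (x j) hxD hx0j hxd t ht
    have e1 : lpNorm p (fun s => h (x j s)) t = a j := rfl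
    have e2 : lpNorm p (fun s => h (x (j - 1) s)) t = a (j - 1) := rfl
    have e3 : lpNorm p (fun s => h (x (j + 1) s)) t = a (j + 1) := rfl
    rw [e1, e2, e3] at hest
    linarith [hQm j hj1 hjn]
  have hgoal : lpNorm p (fun s => h (x i s)) t = a i := rfl
  rw [hgoal]
  have hθ1 : 0 < 1 - θ := by linarith
  have hmax1 : (1:ℝ) ≤ max 1 ((δ / γ) ^ (((n : ℝ) - 1) / 2)) := le_max_left _ _
  rcases lt_or_ge δ γ with hcase | hcase
  · -- Case 1 : δ < γ, θ = γ + δ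
    have hθeq : θ = γ + δ := by rw [hθdef, if_pos hcase]
    have hbound := string_max_principle n hn a U Qm γ δ hUnn hQmnn hγ.le hδ
      (by rw [← hθeq]; exact hθ) ha0.le halast.le (fun j h1 h2 => hann j) hrec i hi1 hin
    have heq : (γ * U + Qm) / (1 - (γ + δ)) = (γ / (1 - θ)) * U + (1 / (1 - θ)) * Qm := by
      rw [hθeq]; field_simp
    rw [heq] at hbound
    calc a i ≤ (γ / (1 - θ)) * U + (1 / (1 - θ)) * Qm := hbound
    _ ≤ (γ / (1 - θ)) * U + (max 1 ((δ / γ) ^ (((n : ℝ) - 1) / 2)) / (1 - θ)) * Qm := by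
        gcongr
  · -- Case 2 : γ ≤ δ, θ = 2√(γδ)
    have hδ0 : 0 < δ := lt_of_lt_of_le hγ hcase
    set g := Real.sqrt γ with hgdef
    set d := Real.sqrt δ with hddef
    have hg : 0 < g := Real.sqrt_pos.mpr hγ
    have hd : 0 < d := Real.sqrt_pos.mpr hδ0
    have hg2 : g ^ 2 = γ := Real.sq_sqrt hγ.le
    have hd2 : d ^ 2 = δ := Real.sq_sqrt hδ0.le
    have hgd : g ≤ d := Real.sqrt_le_sqrt hcase
    have hθeq : θ = 2 * (g * d) := by
      rw [hθdef, if_neg (not_lt.mpr hcase), Real.sqrt_mul hγ.le]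
    set r := g / d with hrdef
    have hr0 : 0 < r := div_pos hg hd
    have hr1 : r ≤ 1 := (div_le_one hd).mpr hgd
    have hrpow : ∀ j : ℕ, 0 < r ^ j := fun j => pow_pos hr0 j
    set b : ℕ → ℝ := fun j => a j / r ^ j with hbdef
    have hb0 : b 0 ≤ U := by simp [hbdef, ha0]
    have hbn : b (n + 1) ≤ 0 := by simp [hbdef, halast]
    have hbnn : ∀ j, 1 ≤ j → j ≤ n → 0 ≤ b j := fun j _ _ =>
      div_nonneg (hann j) (hrpow j).le
    have hgdnn : 0 ≤ g * d := by positivity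
    have hPnn : 0 ≤ Qm / r ^ n := div_nonneg hQmnn (hrpow n).le
    have hbrec : ∀ j, 1 ≤ j → j ≤ n →
        b j ≤ (g * d) * b (j - 1) + (g * d) * b (j + 1) + Qm / r ^ n := by
      intro j hj1 hjn
      obtain ⟨j', rfl⟩ : ∃ j', j = j' + 1 := ⟨j - 1, by omega⟩
      have h1 := hrec (j' + 1) hj1 hjn
      have hstep1 : b (j' + 1) ≤
          (γ * a (j' + 1 - 1) + δ * a (j' + 1 + 1) + Qm) / r ^ (j' + 1) :=
        (div_le_div_iff_of_pos_right (hrpow (j' + 1))).mpr h1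
      have hsimp : j' + 1 - 1 = j' := rfl
      have heq : (γ * a j' + δ * a (j' + 2) + Qm) / r ^ (j' + 1) =
          (g * d) * (a j' / r ^ j') + (g * d) * (a (j' + 2) / r ^ (j' + 2)) +
            Qm / r ^ (j' + 1) := by
        rw [← hg2, ← hd2, hrdef]
        rw [div_pow]
        have := hg.ne'; have := hd.ne'
        simp only [pow_succ, div_pow]
        field_simp
      have hQstep : Qm / r ^ (j' + 1) ≤ Qm / r ^ n :=
        div_le_div_of_nonneg_left hQmnn (hrpow n)
          (pow_le_pow_of_le_one hr0.le hr1 hjn)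
      have hbx : b (j' + 1 - 1) = a j' / r ^ j' := rfl
      have hby : b (j' + 1 + 1) = a (j' + 2) / r ^ (j' + 2) := rfl
      rw [hbx, hby]
      calc b (j' + 1) ≤ (γ * a j' + δ * a (j' + 2) + Qm) / r ^ (j' + 1) := hstep1
      _ = g * d * (a j' / r ^ j') + g * d * (a (j' + 2) / r ^ (j' + 2)) +
            Qm / r ^ (j' + 1) := heq
      _ ≤ g * d * (a j' / r ^ j') + g * d * (a (j' + 2) / r ^ (j' + 2)) +
            Qm / r ^ n := by linarith
    have hθ2 : g * d + g * d < 1 := by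
      have h2 : 2 * (g * d) < 1 := hθeq ▸ hθ
      linarith
    have hbound := string_max_principle n hn b U (Qm / r ^ n) (g * d) (g * d)
      hUnn hPnn hgdnn hgdnn hθ2 hb0 hbn hbnn hbrec i hi1 hin
    -- recover a i
    have hai : a i = b i * r ^ i := by
      rw [hbdef]
      field_simp
    have hri : r ^ i ≤ r := by
      calc r ^ i ≤ r ^ 1 := pow_le_pow_of_le_one hr0.le hr1 hi1
      _ = r := pow_one r
    have hbi0 : 0 ≤ b i := hbnn i hi1 hin
    have hbound2 : a i ≤ ((g * d * U + Qm / r ^ n) / (1 - (g * d + g * d))) * r := by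
      calc a i = b i * r ^ i := hai
      _ ≤ b i * r := by
          exact mul_le_mul_of_nonneg_left hri hbi0
      _ ≤ ((g * d * U + Qm / r ^ n) / (1 - (g * d + g * d))) * r :=
          mul_le_mul_of_nonneg_right hbound hr0.le
    obtain ⟨n', rfl⟩ : ∃ n', n = n' + 1 := ⟨n - 1, by omega⟩
    have hθden : (1 : ℝ) - θ = 1 - (g * d + g * d) := by rw [hθeq]; ring
    -- identify the rpow expression with a natural power
    have hdg : (0:ℝ) ≤ d / g := by positivity
    have eE : (δ / γ) ^ (((↑(n' + 1) : ℝ) - 1) / 2) = (d / g) ^ n' := by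
      have e1 : δ / γ = (d / g) ^ (2 : ℕ) := by rw [div_pow, hg2, hd2]
      rw [e1, ← Real.rpow_natCast (d / g) 2, ← Real.rpow_mul hdg]
      rw [show ((2 : ℕ) : ℝ) * (((↑(n' + 1) : ℝ) - 1) / 2) = (n' : ℝ) by push_cast; ring]
      exact Real.rpow_natCast _ n'
    have hkey : ((g * d * U + Qm / r ^ (n' + 1)) / (1 - (g * d + g * d))) * r =
        (γ / (1 - θ)) * U + ((d / g) ^ n' / (1 - θ)) * Qm := by
      rw [hθden, ← hg2, hrdef, div_pow]
      have hne : (1 : ℝ) - (g * d + g * d) ≠ 0 := by rw [← hθden]; exact hθ1.ne'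
      have := hg.ne'; have := hd.ne'
      simp only [pow_succ, div_pow]
      field_simp
    rw [hkey] at hbound2
    have hEmax : (d / g) ^ n' ≤ max 1 ((δ / γ) ^ (((↑(n' + 1) : ℝ) - 1) / 2)) := by
      rw [eE]; exact le_max_right _ _
    calc a i ≤ (γ / (1 - θ)) * U + ((d / g) ^ n' / (1 - θ)) * Qm := hbound2
    _ ≤ (γ / (1 - θ)) * U +
          (max 1 ((δ / γ) ^ (((↑(n' + 1) : ℝ) - 1) / 2)) / (1 - θ)) * Qm := by
        gcongr
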